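/- Let a_1, ..., a_r be distinct integers such that for every prime p the residues a_1 mod p, ..., a_r mod p do not cover all of Z/pZ, i.e., ν(p; a) < p for every prime p, where ν(p; a) = #{a_1 mod p, ..., a_r mod p}. Then the infinite product C(a) = ∏_p (1 - ν(p;a)/p)/(1 - 1/p)^r, taken over all primes p, converges to a strictly positive real number. -/

import Mathlib

open Filter

private lemma log_one_sub_bound {x : ℝ} (hx : |x| ≤ 1/2) :
    |Real.log (1 - x) + x| ≤ 2 * x ^ 2 := by
  have h1 : |x| < 1 := lt_of_le_of_lt hx (by norm_num)
  have h := Real.abs_log_sub_add_sum_range_le h1 1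
  simp only [Finset.range_one, Finset.sum_singleton, pow_one] at h
  have h2 : (1 : ℝ) - |x| ≥ 1/2 := by linarith
  have h3 : |x| ^ 2 / (1 - |x|) ≤ 2 * x ^ 2 := by
    rw [div_le_iff₀ (by linarith)]
    have : |x| ^ 2 = x ^ 2 := sq_abs x
    nlinarith [sq_nonneg x, abs_nonneg x]
  calc |Real.log (1 - x) + x| = |x / (0 + 1) + Real.log (1 - x)| := by
        ring_nf
      _ ≤ |x| ^ (1 + 1) / (1 - |x|) := by simpa using h
      _ ≤ 2 * x ^ 2 := h3

/-- For an `r`-tuple `a` of distinct integers such that the residues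
`a 1 mod p, …, a r mod p` never cover all of `ℤ/pℤ`, the Hardy–Littlewood singular
series `C(a) = ∏_p (1 - ν(p;a)/p) / (1 - 1/p)^r` converges to a strictly positive
real number, where `ν(p;a)` is the number of distinct residues of the `a i` mod `p`. -/
theorem singular_series_converges_and_positive (r : ℕ) (a : Fin r → ℤ)
    (ha : Function.Injective a)
    (hcov : ∀ p : ℕ, p.Prime →
      (Finset.univ.image fun i => ((a i : ZMod p))).card < p) :
    ∃ L : ℝ, 0 < L ∧
      Tendsto (fun N : ℕ => ∏ p ∈ (Finset.range (N + 1)).filter Nat.Prime,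
          (1 - ((Finset.univ.image fun i => ((a i : ZMod p))).card : ℝ) / (p : ℝ)) /
            (1 - 1 / (p : ℝ)) ^ r)
        atTop (nhds L) := by
  classical
  set ν : ℕ → ℕ := fun p => (Finset.univ.image fun i => ((a i : ZMod p))).card with hν
  set f : ℕ → ℝ := fun p => (1 - (ν p : ℝ) / p) / (1 - 1 / (p : ℝ)) ^ r with hf
  set g : ℕ → ℝ := fun n => if n.Prime then f n else 1 with hg
  -- positivity of factors
  have hfpos : ∀ p : ℕ, p.Prime → 0 < f p := by
    intro p hp
    have hp2 : (2 : ℝ) ≤ p := by exact_mod_cast hp.two_le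
    have hnum : 0 < 1 - (ν p : ℝ) / p := by
      have h := hcov p hp
      have : (ν p : ℝ) < p := by exact_mod_cast h
      have hp0 : (0 : ℝ) < p := by linarith
      rw [sub_pos, div_lt_one hp0]; exact this
    have hden : 0 < (1 - 1 / (p : ℝ)) ^ r := by
      apply pow_pos
      rw [sub_pos, div_lt_one (by linarith)]
      linarith
    exact div_pos hnum hden
  have hgpos : ∀ n : ℕ, 0 < g n := by
    intro n
    by_cases hn : n.Prime
    · simpa [hg, hn] using hfpos n hn
    · simp [hg, hn]
  -- bound on pairwise differences
  set D : ℕ := Finset.univ.sup (fun ij : Fin r × Fin r => (a ij.1 - a ij.2).natAbs) with hD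
  -- for large primes, ν p = r
  have hνr : ∀ p : ℕ, p.Prime → D < p → ν p = r := by
    intro p hp hDp
    have : Function.Injective fun i => ((a i : ZMod p)) := by
      intro i j hij
      have : ((a i - a j : ℤ) : ZMod p) = 0 := by
        push_cast [sub_eq_zero]
        exact hij
      rw [ZMod.intCast_zmod_eq_zero_iff_dvd] at this
      have habs : |a i - a j| < (p : ℤ) := by
        have h1 : (a i - a j).natAbs ≤ D :=
          Finset.le_sup (f := fun ij : Fin r × Fin r => (a ij.1 - a ij.2).natAbs)
            (Finset.mem_univ (i, j))
        rw [Int.abs_eq_natAbs]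
        exact_mod_cast lt_of_le_of_lt h1 hDp
      have := Int.eq_zero_of_abs_lt_dvd this habs
      exact ha (by linarith [sub_eq_zero.mp this])
    show (Finset.univ.image fun i => ((a i : ZMod p))).card = r
    rw [Finset.card_image_of_injective _ this, Finset.card_univ, Fintype.card_fin]
  -- ν p ≤ r always
  have hνle : ∀ p : ℕ, ν p ≤ r := fun p =>
    le_trans (Finset.card_image_le) (by simp)
  -- the log terms
  set h : ℕ → ℝ := fun n => Real.log (g n) with hh
  -- summability of h
  have hsum : Summable h := by
    refine Summable.of_norm_bounded_eventually_nat (g := fun n => (2 * r ^ 2 + 2 * r) / (n : ℝ) ^ 2)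
      ?_ ?_
    · have hs : Summable (fun n : ℕ => 1 / (n : ℝ) ^ 2) :=
        Real.summable_one_div_nat_pow.mpr one_lt_two
      simpa [div_eq_mul_inv, one_div] using hs.mul_left ((2 : ℝ) * r ^ 2 + 2 * r)
    · filter_upwards [eventually_gt_atTop (max D (2 * r + 2))] with n hn
      have hnD : D < n := lt_of_le_of_lt (le_max_left _ _) hn
      have hnr : 2 * r + 2 < n := lt_of_le_of_lt (le_max_right _ _) hn
      by_cases hp : n.Prime
      · have hν' : ν n = r := hνr n hp hnD
        have hn0 : (0 : ℝ) < n := by exact_mod_cast hp.pos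
        have hn2 : (2 : ℝ) ≤ n := by exact_mod_cast hp.two_le
        have hnrR : 2 * (r : ℝ) + 2 < n := by exact_mod_cast hnr
        have hrn : (r : ℝ) / n ≤ 1 / 2 := by
          rw [div_le_div_iff₀ hn0 two_pos]; linarith
        have h1n : (1 : ℝ) / n ≤ 1 / 2 := by
          rw [div_le_div_iff₀ hn0 two_pos]; linarith
        have hx1 : |(r : ℝ) / n| ≤ 1 / 2 := by
          rw [abs_of_nonneg (by positivity : (0:ℝ) ≤ (r : ℝ) / n)]; exact hrn
        have hx2 : |(1 : ℝ) / n| ≤ 1 / 2 := by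
          rw [abs_of_nonneg (by positivity : (0:ℝ) ≤ (1 : ℝ) / n)]; exact h1n
        have hnum : 0 < 1 - (r : ℝ) / n := by linarith
        have hden : 0 < 1 - 1 / (n : ℝ) := by linarith
        have hval : h n = Real.log (1 - (r : ℝ) / n) - r * Real.log (1 - 1 / (n : ℝ)) := by
          simp only [hh, hg, hp, if_true, hf, hν']
          rw [Real.log_div (ne_of_gt hnum) (ne_of_gt (pow_pos hden r)), Real.log_pow]
        have key : h n = (Real.log (1 - (r : ℝ) / n) + (r : ℝ) / n)
            - r * (Real.log (1 - 1 / (n : ℝ)) + 1 / n) := by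
          rw [hval]; ring
        rw [Real.norm_eq_abs, key]
        have b1 := log_one_sub_bound hx1
        have b2 := log_one_sub_bound hx2
        calc |(Real.log (1 - (r : ℝ) / n) + (r : ℝ) / n)
              - r * (Real.log (1 - 1 / (n : ℝ)) + 1 / n)|
            ≤ |Real.log (1 - (r : ℝ) / n) + (r : ℝ) / n|
              + (r : ℝ) * |Real.log (1 - 1 / (n : ℝ)) + 1 / n| := by
              refine le_trans (abs_sub _ _) ?_
              rw [abs_mul, abs_of_nonneg (by positivity : (0:ℝ) ≤ (r:ℝ))]
          _ ≤ 2 * ((r : ℝ) / n) ^ 2 + (r : ℝ) * (2 * (1 / (n : ℝ)) ^ 2) := by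
              gcongr
          _ = (2 * r ^ 2 + 2 * r) / (n : ℝ) ^ 2 := by
              field_simp
      · simp only [hh, hg, hp, if_false, Real.log_one, Real.norm_eq_abs, abs_zero]
        positivity
  -- partial products equal exp of partial sums
  have hprod : ∀ N : ℕ, (∏ p ∈ (Finset.range (N + 1)).filter Nat.Prime, f p)
      = Real.exp (∑ n ∈ Finset.range (N + 1), h n) := by
    intro N
    rw [Real.exp_sum]
    rw [Finset.prod_filter]
    apply Finset.prod_congr rfl
    intro n _
    by_cases hp : n.Prime
    · simp only [hh, hg, hp, if_true]
      rw [Real.exp_log (hfpos n hp)]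
    · simp [hh, hg, hp]
  refine ⟨Real.exp (∑' n, h n), Real.exp_pos _, ?_⟩
  have hts : Tendsto (fun N : ℕ => ∑ n ∈ Finset.range (N + 1), h n) atTop
      (nhds (∑' n, h n)) :=
    (hsum.hasSum.tendsto_sum_nat).comp (tendsto_add_atTop_nat 1)
  have := (Real.continuous_exp.continuousAt.tendsto.comp hts)
  refine this.congr ?_
  intro N
  exact (hprod N).symm
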